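/- For every real α > 1 and every natural number n ≥ 2, Σ_{i=2}^{n} Γ(i−1)/Γ(i + 1/(α−1)) = ((−αn + n − 1)·Γ(n)) / Γ((nα + α − n)/(α−1)) + α / Γ((2α−1)/(α−1)), where Γ is the Gamma function. -/

import Mathlib

open Real

lemma tele (c x : ℝ) (hc : 0 < c) (hx : 0 < x) :
    Real.Gamma x / Real.Gamma (x + c + 1) =
      (1/c) * (Real.Gamma x / Real.Gamma (x + c) - Real.Gamma (x + 1) / Real.Gamma (x + 1 + c)) := by
  have hxc : 0 < x + c := by linarith
  have h1 : Real.Gamma (x + c + 1) = (x + c) * Real.Gamma (x + c) := Real.Gamma_add_one hxc.ne'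
  have h2 : Real.Gamma (x + 1) = x * Real.Gamma x := Real.Gamma_add_one hx.ne'
  have h3 : x + 1 + c = x + c + 1 := by ring
  rw [h3, h1, h2]
  have hG : Real.Gamma (x + c) ≠ 0 := (Real.Gamma_pos_of_pos hxc).ne'
  field_simp
  ring

lemma sum_tele (c : ℝ) (hc : 0 < c) (n : ℕ) (hn : 2 ≤ n) :
    ∑ i ∈ Finset.Icc 2 n, Real.Gamma ((i : ℝ) - 1) / Real.Gamma ((i : ℝ) + c) =
      (1/c) * (Real.Gamma 1 / Real.Gamma (1 + c) - Real.Gamma n / Real.Gamma (n + c)) := by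
  induction n, hn using Nat.le_induction with
  | base =>
      rw [show Finset.Icc 2 2 = {2} from rfl, Finset.sum_singleton]
      have := tele c 1 hc one_pos
      norm_num at this ⊢
      rw [show (2:ℝ) + c = 1 + c + 1 by ring]
      convert this using 3 <;> ring
  | succ n hn ih =>
      rw [Finset.sum_Icc_succ_top (by omega : 2 ≤ n + 1), ih]
      have hx : (0:ℝ) < n := by positivity
      have := tele c n hc (by exact_mod_cast (by omega : 0 < n) : (0:ℝ) < n)
      push_cast
      rw [show (n:ℝ) + 1 - 1 = n by ring, show (n:ℝ) + 1 + c = n + c + 1 by ring, this]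
      ring

theorem stmt3 (α : ℝ) (n : ℕ) (hα : 1 < α) (hn : 2 ≤ n) :
    ∑ i ∈ Finset.Icc 2 n, Real.Gamma ((i : ℝ) - 1) / Real.Gamma ((i : ℝ) + 1 / (α - 1)) =
      (-α * n + n - 1) * Real.Gamma n / Real.Gamma ((n * α + α - n) / (α - 1)) +
        α / Real.Gamma ((2 * α - 1) / (α - 1)) := by
  have hα1 : α - 1 ≠ 0 := by linarith
  obtain ⟨c, hcdef⟩ : ∃ c : ℝ, c = 1 / (α - 1) := ⟨_, rfl⟩
  have hc : 0 < c := hcdef ▸ div_pos one_pos (by linarith)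
  rw [← hcdef, sum_tele c hc n hn]
  have e1 : (n * α + α - n) / (α - 1) = (n : ℝ) + c + 1 := by
    rw [hcdef]; field_simp; ring
  have e2 : (2 * α - 1) / (α - 1) = 1 + c + 1 := by
    rw [hcdef]; field_simp; ring
  have k1 : -α * n + n - 1 = -(α - 1) * ((n : ℝ) + c) := by
    rw [hcdef]; field_simp; ring
  have k2 : α = (α - 1) * (1 + c) := by rw [hcdef]; field_simp; ring
  have k3 : (1:ℝ) / c = α - 1 := by rw [hcdef]; field_simp
  have hnc : (0:ℝ) < (n:ℝ) + c := by positivity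
  have h1c : (0:ℝ) < 1 + c := by positivity
  have hGn : Real.Gamma ((n:ℝ) + c) ≠ 0 := (Real.Gamma_pos_of_pos hnc).ne'
  have hG1 : Real.Gamma (1 + c) ≠ 0 := (Real.Gamma_pos_of_pos h1c).ne'
  rw [e1, e2, Real.Gamma_add_one hnc.ne', Real.Gamma_add_one h1c.ne', Real.Gamma_one, k3]
  have t1 : (-α * n + n - 1) * Real.Gamma n / (((n:ℝ) + c) * Real.Gamma ((n:ℝ) + c)) =
      -(α - 1) * Real.Gamma n / Real.Gamma ((n:ℝ) + c) := by
    rw [k1]; field_simp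
  have t2 : α / ((1 + c) * Real.Gamma (1 + c)) = (α - 1) / Real.Gamma (1 + c) := by
    conv_lhs => rw [k2]
    rw [mul_comm (α - 1) (1 + c), mul_div_mul_left _ _ h1c.ne']
  rw [t1, t2]
  field_simp
  ring
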